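/- Let n be a natural number, δ > 0, 0 < ε < 2δ, λ₁, λ₂ ∈ [0, 1], and c ∈ ℝ. Let S ⊆ (Fin n → ℝ) be a measurable set such that vol(S ∩ Box(c)) ≥ (1 − λ₁)·(2δ)^n and vol(Sᶜ ∩ Box(c − ε)) ≥ (1 − λ₂)·(2δ)^n, where vol denotes n-dimensional Lebesgue measure and Sᶜ is the complement of S. Then (λ₁ + λ₂)·(2δ)^n ≥ (2δ − ε)^n. -/

import Mathlib

open MeasureTheory Set

lemma box_vol (n : ℕ) (a b : ℝ) (h : a ≤ b) :
    volume {y : Fin n → ℝ | ∀ i, y i ∈ Set.Icc a b} = ENNReal.ofReal ((b - a) ^ n) := by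
  have hset : {y : Fin n → ℝ | ∀ i, y i ∈ Set.Icc a b}
      = Set.univ.pi (fun _ : Fin n => Set.Icc a b) := by
    ext y; simp only [Set.mem_pi, Set.mem_univ, forall_true_left, Set.mem_setOf_eq, true_implies]
  rw [hset, volume_pi_pi]
  simp [Real.volume_Icc, ENNReal.ofReal_pow (sub_nonneg.2 h)]

lemma box_meas (n : ℕ) (a b : ℝ) :
    MeasurableSet {y : Fin n → ℝ | ∀ i, y i ∈ Set.Icc a b} := by
  have hset : {y : Fin n → ℝ | ∀ i, y i ∈ Set.Icc a b}
      = Set.univ.pi (fun _ : Fin n => Set.Icc a b) := by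
    ext y; simp only [Set.mem_pi, Set.mem_univ, forall_true_left, Set.mem_setOf_eq, true_implies]
  rw [hset]
  exact MeasurableSet.univ_pi fun _ => measurableSet_Icc

/-- Two-point distinguishing lemma: if `S` occupies at least a `(1-λ₁)`-fraction of
`Box(c)` and its complement occupies at least a `(1-λ₂)`-fraction of `Box(c-ε)`,
then `(λ₁ + λ₂)·(2δ)^n ≥ (2δ - ε)^n`. -/
theorem two_point_distinguishing (n : ℕ) (δ ε : ℝ) (hδ : 0 < δ) (hε0 : 0 < ε)
    (hε : ε < 2 * δ) (lam₁ lam₂ : ℝ) (hlam₁ : lam₁ ∈ Set.Icc (0 : ℝ) 1)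
    (hlam₂ : lam₂ ∈ Set.Icc (0 : ℝ) 1) (c : ℝ)
    (S : Set (Fin n → ℝ)) (hS : MeasurableSet S)
    (h₁ : ENNReal.ofReal ((1 - lam₁) * (2 * δ) ^ n) ≤
      MeasureTheory.volume (S ∩ {y : Fin n → ℝ | ∀ i, y i ∈ Set.Icc (c - δ) (c + δ)}))
    (h₂ : ENNReal.ofReal ((1 - lam₂) * (2 * δ) ^ n) ≤
      MeasureTheory.volume
        (Sᶜ ∩ {y : Fin n → ℝ | ∀ i, y i ∈ Set.Icc (c - ε - δ) (c - ε + δ)})) :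
    (2 * δ - ε) ^ n ≤ (lam₁ + lam₂) * (2 * δ) ^ n := by
  set B₁ := {y : Fin n → ℝ | ∀ i, y i ∈ Set.Icc (c - δ) (c + δ)} with hB₁
  set B₂ := {y : Fin n → ℝ | ∀ i, y i ∈ Set.Icc (c - ε - δ) (c - ε + δ)} with hB₂
  set a := (2 * δ) ^ n with ha
  set b := (2 * δ - ε) ^ n with hb
  have ha0 : (0:ℝ) ≤ a := pow_nonneg (by linarith) n
  have hb0 : (0:ℝ) ≤ b := pow_nonneg (by linarith) n
  have hba : b ≤ a := pow_le_pow_left₀ (by linarith) (by linarith) n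
  have hvB₁ : volume B₁ = ENNReal.ofReal a := by
    rw [hB₁, box_vol n _ _ (by linarith), ha]; ring_nf
  have hvB₂ : volume B₂ = ENNReal.ofReal a := by
    rw [hB₂, box_vol n _ _ (by linarith), ha]; ring_nf
  have hinter : B₁ ∩ B₂ = {y : Fin n → ℝ | ∀ i, y i ∈ Set.Icc (c - δ) (c - ε + δ)} := by
    ext y
    simp only [hB₁, hB₂, Set.mem_inter_iff, Set.mem_setOf_eq, Set.mem_Icc]
    constructor
    · rintro ⟨p, q⟩ i
      exact ⟨(p i).1, (q i).2⟩
    · intro p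
      exact ⟨fun i => ⟨(p i).1, by linarith [(p i).2]⟩,
        fun i => ⟨by linarith [(p i).1], (p i).2⟩⟩
  have hvI : volume (B₁ ∩ B₂) = ENNReal.ofReal b := by
    rw [hinter, box_vol n _ _ (by linarith), hb]; ring_nf
  have hmB₁ : MeasurableSet B₁ := box_meas n _ _
  have hmB₂ : MeasurableSet B₂ := box_meas n _ _
  -- disjoint union
  have hdisj : Disjoint (S ∩ B₁) (Sᶜ ∩ B₂) :=
    Disjoint.mono Set.inter_subset_left Set.inter_subset_left disjoint_compl_right
  have hU : volume (S ∩ B₁) + volume (Sᶜ ∩ B₂) = volume ((S ∩ B₁) ∪ (Sᶜ ∩ B₂)) :=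
    (measure_union hdisj (hS.compl.inter hmB₂)).symm
  have hsub : (S ∩ B₁) ∪ (Sᶜ ∩ B₂) ⊆ B₁ ∪ B₂ :=
    Set.union_subset_union Set.inter_subset_right Set.inter_subset_right
  have hvU : volume (B₁ ∪ B₂) + volume (B₁ ∩ B₂) = volume B₁ + volume B₂ :=
    measure_union_add_inter B₁ hmB₂
  have key : ENNReal.ofReal ((1 - lam₁) * a) + ENNReal.ofReal ((1 - lam₂) * a)
      ≤ volume (B₁ ∪ B₂) := by
    calc _ ≤ volume (S ∩ B₁) + volume (Sᶜ ∩ B₂) := add_le_add h₁ h₂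
    _ = volume ((S ∩ B₁) ∪ (Sᶜ ∩ B₂)) := hU
    _ ≤ volume (B₁ ∪ B₂) := measure_mono hsub
  have hvUval : volume (B₁ ∪ B₂) = ENNReal.ofReal (2 * a - b) := by
    have : volume (B₁ ∪ B₂) + ENNReal.ofReal b = ENNReal.ofReal a + ENNReal.ofReal a := by
      rw [← hvI]; rw [hvU, hvB₁, hvB₂]
    have h2 : ENNReal.ofReal a + ENNReal.ofReal a
        = ENNReal.ofReal (2 * a - b) + ENNReal.ofReal b := by
      rw [← ENNReal.ofReal_add ha0 ha0, ← ENNReal.ofReal_add (by linarith) hb0]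
      ring_nf
    rw [h2] at this
    exact (ENNReal.add_left_inj ENNReal.ofReal_ne_top).mp this
  rw [hvUval, ← ENNReal.ofReal_add (by nlinarith [hlam₁.2] : (0:ℝ) ≤ (1 - lam₁) * a)
    (by nlinarith [hlam₂.2] : (0:ℝ) ≤ (1 - lam₂) * a)] at key
  have := (ENNReal.ofReal_le_ofReal_iff (by linarith)).mp key
  nlinarith [hlam₁.1, hlam₂.1]
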